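/- arXiv:1810.09575 — 2 statements merged into one kernel-verified Lean document; each statement's English description precedes it below -/
import Mathlib

section
/- For every α : Finset Q and every β ∈ S_X: E_{α Δ β} = E_α. (Lemma 1, invariance of the propagated-error coset E under stabilizers.) -/
open Finset
open scoped symmDiff Matrix

namespace CC

variable {Q : Type*} [Fintype Q] [DecidableEq Q]

/-- A subgroup of the abelian group `(Finset Q, ∆)`. -/
def IsSubgroup (S : Set (Finset Q)) : Prop :=
  ∅ ∈ S ∧ ∀ a ∈ S, ∀ b ∈ S, a ∆ b ∈ S

/-- The subgroup of `(Finset Q, ∆)` generated by a set. -/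
def closure (T : Set (Finset Q)) : Set (Finset Q) :=
  ⋂₀ {S : Set (Finset Q) | IsSubgroup S ∧ T ⊆ S}

/-- A CSS stabilizer code on the qubits `Q`. -/
structure CSS (Q : Type*) [Fintype Q] [DecidableEq Q] where
  SX : Set (Finset Q)
  SZ : Set (Finset Q)
  hSX : IsSubgroup SX
  hSZ : IsSubgroup SZ
  comm : ∀ a ∈ SZ, ∀ b ∈ SX, 2 ∣ (a ∩ b).card

def ZX (C : CSS Q) : Set (Finset Q) := {γ | ∀ f ∈ C.SZ, 2 ∣ (γ ∩ f).card}

def ZZ (C : CSS Q) : Set (Finset Q) := {z | ∀ c ∈ C.SX, 2 ∣ (z ∩ c).card}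

/-- Duality assumption. -/
def Dual (C : CSS Q) : Prop :=
  C.SZ = {z | ∀ γ ∈ ZX C, 2 ∣ (z ∩ γ).card} ∧
  C.SX = {c | ∀ z ∈ ZZ C, 2 ∣ (c ∩ z).card}

def LogicalX (C : CSS Q) (l : Finset Q) : Prop := l ∈ ZX C ∧ l ∉ C.SX

def LogicalZ (C : CSS Q) (l : Finset Q) : Prop := l ∈ ZZ C ∧ l ∉ C.SZ

/-- Single-logical-qubit assumption. -/
def SingleQubit (C : CSS Q) : Prop :=
  (ZX C ≠ C.SX ∧ ∀ l l', LogicalX C l → LogicalX C l' → l ∆ l' ∈ C.SX) ∧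
  (ZZ C ≠ C.SZ ∧ ∀ l l', LogicalZ C l → LogicalZ C l' → l ∆ l' ∈ C.SZ)

/-- Intersection axiom. -/
def Inter (C : CSS Q) : Prop :=
  ZZ C = {x | ∃ α ∈ ZX C, ∃ β ∈ ZX C, x = α ∩ β}

def G (C : CSS Q) (α : Finset Q) : Set (Finset Q) :=
  closure (C.SZ ∪ {x | ∃ β ∈ ZX C, x = α ∩ β})

def H (C : CSS Q) (α : Finset Q) : Set (Finset Q) :=
  closure (C.SZ ∪ {x | ∃ β ∈ C.SX, x = α ∩ β})

def Zof (K : Set (Finset Q)) : Set (Finset Q) := {γ | ∀ h ∈ K, 2 ∣ (γ ∩ h).card}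

def Tolerable (C : CSS Q) (α : Finset Q) : Prop := ∀ z ∈ G C α, ¬ LogicalZ C z

def g (b : Q → ℤ) (s : Finset Q) : ℤ := ∑ q ∈ s, b q

/-- T-invariance assumption. -/
def TInv (C : CSS Q) (b : Q → ℤ) : Prop :=
  (∀ β ∈ C.SX, (8 : ℤ) ∣ g b β) ∧
  (∀ β ∈ C.SX, ∀ γ ∈ ZX C, (8 : ℤ) ∣ (g b β - 2 * g b (γ ∩ β)))

def E (C : CSS Q) (b : Q → ℤ) (α : Finset Q) : Set (Finset Q) :=
  {z | ∀ γ ∈ Zof (G C α), g b (γ ∩ α) ≡ 2 * ((z ∩ γ).card : ℤ) [ZMOD 4]}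

/- Quantum setting -/

abbrev M (Q : Type*) [Fintype Q] [DecidableEq Q] :=
  Matrix (Q → ZMod 2) (Q → ZMod 2) ℂ

def supp (v : Q → ZMod 2) : Finset Q := Finset.univ.filter (fun q => v q = 1)

def ind (α : Finset Q) : Q → ZMod 2 := fun q => if q ∈ α then 1 else 0

def XM (α : Finset Q) : M Q :=
  Matrix.of fun u v => if u = v + ind α then (1 : ℂ) else 0

noncomputable def ZM (α : Finset Q) : M Q :=
  Matrix.diagonal fun v => (-1 : ℂ) ^ (supp v ∩ α).card

noncomputable def AM (b : Q → ℤ) (α : Finset Q) : M Q :=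
  Matrix.diagonal fun v => Complex.I ^ (g b (α ∩ supp v))

noncomputable def UM (b : Q → ℤ) : M Q :=
  Matrix.diagonal fun v => Complex.exp (Real.pi * Complex.I / 4) ^ (g b (supp v))

def Encoded (C : CSS Q) (ρ : M Q) : Prop :=
  ρ.trace = 1 ∧
  (∀ c ∈ C.SX, XM c * ρ = ρ ∧ ρ * XM c = ρ) ∧
  (∀ f ∈ C.SZ, ZM f * ρ = ρ ∧ ρ * ZM f = ρ)

instance : Std.Commutative (α := Finset Q) (· ∆ ·) := ⟨symmDiff_comm⟩
instance : Std.Associative (α := Finset Q) (· ∆ ·) := ⟨symmDiff_assoc⟩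

/-- Iterated symmetric difference over a finite index set. -/
def bigΔ {ι : Type*} (s : Finset ι) (f : ι → Finset Q) : Finset Q :=
  s.fold (· ∆ ·) ∅ f

lemma subset_closure' (T : Set (Finset Q)) : T ⊆ closure T := by
  intro x hx S hS
  exact hS.2 hx

lemma closure_le' {T S : Set (Finset Q)} (hS : IsSubgroup S) (h : T ⊆ S) :
    closure T ⊆ S := fun _ hx => hx S ⟨hS, h⟩

lemma isSubgroup_closure' (T : Set (Finset Q)) : IsSubgroup (closure T) := by
  constructor
  · intro S hS; exact hS.1.1
  · intro a ha c hc S hS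
    exact hS.1.2 a (ha S hS) c (hc S hS)

lemma g_symmDiff' (b : Q → ℤ) (s t : Finset Q) :
    g b (s ∆ t) = g b s + g b t - 2 * g b (s ∩ t) := by
  have h1 : g b s = g b (s \ t) + g b (s ∩ t) := by
    rw [g, g, g, ← Finset.sum_union (Finset.disjoint_sdiff_inter s t),
      Finset.sdiff_union_inter]
  have h2 : g b t = g b (t \ s) + g b (s ∩ t) := by
    rw [g, g, g, Finset.inter_comm, ← Finset.sum_union (Finset.disjoint_sdiff_inter t s),
      Finset.sdiff_union_inter]
  have h3 : g b (s ∆ t) = g b (s \ t) + g b (t \ s) := by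
    rw [symmDiff_def, Finset.sup_eq_union, g, g, g,
      Finset.sum_union (disjoint_sdiff_sdiff)]
  linarith

lemma two_dvd_g' {b : Q → ℤ} (hb : ∀ q, Odd (b q)) {s : Finset Q}
    (h : 2 ∣ s.card) : (2 : ℤ) ∣ g b s := by
  have h1 : (2 : ℤ) ∣ g b s - s.card := by
    have he : g b s - (s.card : ℤ) = ∑ q ∈ s, (b q - 1) := by
      rw [Finset.sum_sub_distrib, Finset.sum_const, nsmul_eq_mul, mul_one, g]
    rw [he]
    refine Finset.dvd_sum fun q _ => ?_
    obtain ⟨k, hk⟩ := hb q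
    omega
  have h2 : (2 : ℤ) ∣ (s.card : ℤ) := by exact_mod_cast Int.natCast_dvd_natCast.2 h
  omega

lemma inter_mem_SZ' {C : CSS Q} (hdual : Dual C) (hinter : Inter C)
    {β γ : Finset Q} (hβ : β ∈ C.SX) (hγ : γ ∈ ZX C) : β ∩ γ ∈ C.SZ := by
  rw [hdual.1]
  intro γ' hγ'
  have hz : γ ∩ γ' ∈ ZZ C := by
    rw [hinter]; exact ⟨γ, hγ, γ', hγ', rfl⟩
  have h := hz β hβ
  have he : (β ∩ γ) ∩ γ' = (γ ∩ γ') ∩ β := by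
    ext q; simp only [Finset.mem_inter]; tauto
  rwa [he]

lemma mem_ZX_of_SX' {C : CSS Q} {β : Finset Q} (hβ : β ∈ C.SX) : β ∈ ZX C := by
  intro f hf
  have := C.comm f hf β hβ
  rwa [Finset.inter_comm]

lemma G_subset' {C : CSS Q} (hdual : Dual C) (hinter : Inter C)
    {α β : Finset Q} (hβ : β ∈ C.SX) : G C (α ∆ β) ⊆ G C α := by
  apply closure_le' (isSubgroup_closure' _)
  rintro x (hx | ⟨γ, hγ, rfl⟩)
  · exact subset_closure' _ (Or.inl hx)
  · have h1 : (α ∆ β) ∩ γ = (α ∩ γ) ∆ (β ∩ γ) := by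
      ext q; simp only [Finset.mem_inter, Finset.mem_symmDiff]; tauto
    rw [h1]
    exact (isSubgroup_closure' _).2 _ (subset_closure' _ (Or.inr ⟨γ, hγ, rfl⟩)) _
      (subset_closure' _ (Or.inl (inter_mem_SZ' hdual hinter hβ hγ)))

lemma G_eq' {C : CSS Q} (hdual : Dual C) (hinter : Inter C)
    {α β : Finset Q} (hβ : β ∈ C.SX) : G C (α ∆ β) = G C α := by
  refine subset_antisymm (G_subset' hdual hinter hβ) ?_
  have h := G_subset' hdual hinter hβ (α := α ∆ β)
  rwa [symmDiff_symmDiff_cancel_right] at h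

/-- Lemma 1: invariance of the propagated-error coset `E` under stabilizers. -/
theorem E_invariance
    (C : CSS Q) (b : Q → ℤ) (hb : ∀ q, Odd (b q))
    (hdual : Dual C) (hinter : Inter C) (htinv : TInv C b)
    (α β : Finset Q) (hβ : β ∈ C.SX) :
    E C b (α ∆ β) = E C b α := by
  have hG : G C (α ∆ β) = G C α := G_eq' hdual hinter hβ
  have hZof : Zof (G C (α ∆ β)) = Zof (G C α) := by rw [hG]
  have key : ∀ γ ∈ Zof (G C α), g b (γ ∩ (α ∆ β)) ≡ g b (γ ∩ α) [ZMOD 4] := by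
    intro γ hγ
    have hγZX : γ ∈ ZX C := fun f hf => hγ f (subset_closure' _ (Or.inl hf))
    have hsplit : γ ∩ (α ∆ β) = (γ ∩ α) ∆ (γ ∩ β) := by
      ext q; simp only [Finset.mem_inter, Finset.mem_symmDiff]; tauto
    have hiab : (γ ∩ α) ∩ (γ ∩ β) = γ ∩ (α ∩ β) := by
      ext q; simp only [Finset.mem_inter]; tauto
    have hgs : g b (γ ∩ (α ∆ β)) =
        g b (γ ∩ α) + g b (γ ∩ β) - 2 * g b (γ ∩ (α ∩ β)) := by
      rw [hsplit, g_symmDiff', hiab]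
    have h4 : (4 : ℤ) ∣ g b (γ ∩ β) := by
      obtain ⟨k, hk⟩ := htinv.1 β hβ
      obtain ⟨m, hm⟩ := htinv.2 β hβ γ hγZX
      omega
    have hmem : α ∩ β ∈ G C α :=
      subset_closure' _ (Or.inr ⟨β, mem_ZX_of_SX' hβ, rfl⟩)
    have h2 : (2 : ℤ) ∣ g b (γ ∩ (α ∩ β)) := two_dvd_g' hb (hγ _ hmem)
    have hdvd : (4 : ℤ) ∣ g b (γ ∩ α) - g b (γ ∩ (α ∆ β)) := by
      rw [hgs]
      obtain ⟨k, hk⟩ := h4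
      obtain ⟨m, hm⟩ := h2
      rw [hk, hm]; ring_nf; omega
    exact (Int.modEq_iff_dvd.2 hdvd)
  ext z
  simp only [E, Set.mem_setOf_eq]
  constructor
  · intro h γ hγ
    have h' := h γ (by rw [hZof]; exact hγ)
    exact (key γ hγ).symm.trans h'
  · intro h γ hγ'
    have hγ : γ ∈ Zof (G C α) := by rwa [hZof] at hγ'
    exact (key γ hγ).trans (h γ hγ)

end CC
end

section
/- For every α : Finset Q there exists a tolerable α' : Finset Q with α Δ α' ∈ Z_X(S) (i.e. α' has the same syndrome as α); moreover, if α and α' are both tolerable and α Δ α' ∈ Z_X(S), then α Δ α' ∈ S_X. (For every X-error syndrome there exists exactly one class, up to stabilizers, of tolerable errors with that syndrome; hence tolerable errors form a set of correctable errors.) -/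
open Finset
open scoped symmDiff Matrix

namespace CC

variable {Q : Type*} [Fintype Q] [DecidableEq Q]

set_option linter.unusedSectionVars false

open LinearMap in
lemma fredholm {K V : Type*} [Field K] [AddCommGroup V] [Module K V] [FiniteDimensional K V]
    (Φ : V →ₗ[K] V →ₗ[K] K) (hsymm : ∀ x y, Φ x y = Φ y x)
    (u : V →ₗ[K] K) (h : ∀ c, Φ c = 0 → u c = 0) : ∃ s, Φ s = u := by
  have hmem : u ∈ (LinearMap.ker Φ).dualAnnihilator := by
    rw [Submodule.mem_dualAnnihilator]
    intro w hw
    exact h w (LinearMap.mem_ker.mp hw)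
  rw [← LinearMap.range_dualMap_eq_dualAnnihilator_ker Φ] at hmem
  obtain ⟨ξ, hξ⟩ := hmem
  obtain ⟨s, rfl⟩ := (Module.evalEquiv K V).surjective ξ
  refine ⟨s, ?_⟩
  ext y
  have : (Φ.dualMap (Module.evalEquiv K V s)) y = Φ y s := rfl
  rw [← hξ, this, hsymm]

/-- indicator function with values in `ZMod 2` -/
def ind2 (s : Finset Q) : Q → ZMod 2 := fun q => if q ∈ s then 1 else 0

lemma ind2_symmDiff (a b : Finset Q) : ind2 (a ∆ b) = ind2 a + ind2 b := by
  funext q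
  simp only [ind2, Finset.mem_symmDiff, Pi.add_apply]
  by_cases ha : q ∈ a <;> by_cases hb : q ∈ b <;> simp [ha, hb] <;> decide

lemma ind2_inter (a b : Finset Q) : ind2 (a ∩ b) = ind2 a * ind2 b := by
  funext q
  simp only [ind2, Finset.mem_inter, Pi.mul_apply]
  by_cases ha : q ∈ a <;> by_cases hb : q ∈ b <;> simp [ha, hb]

lemma card_cast (s : Finset Q) : ((s.card : ZMod 2)) = ∑ q, ind2 s q := by
  classical
  unfold ind2
  rw [Finset.sum_ite_mem, Finset.univ_inter, Finset.sum_const, nsmul_eq_mul, mul_one]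

lemma two_dvd_iff (n : ℕ) : 2 ∣ n ↔ (n : ZMod 2) = 0 :=
  (ZMod.natCast_eq_zero_iff n 2).symm

/-- parity of intersection -/
def pc (a b : Finset Q) : ZMod 2 := ((a ∩ b).card : ZMod 2)

lemma pc_eq_sum (a b : Finset Q) : pc a b = ∑ q, ind2 a q * ind2 b q := by
  rw [pc, card_cast, ind2_inter]; rfl

lemma pc_comm (a b : Finset Q) : pc a b = pc b a := by rw [pc, pc, Finset.inter_comm]

lemma dvd_iff_pc (a b : Finset Q) : 2 ∣ (a ∩ b).card ↔ pc a b = 0 := two_dvd_iff _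

lemma pc_symmDiff_left (a b c : Finset Q) : pc (a ∆ b) c = pc a c + pc b c := by
  simp only [pc_eq_sum, ind2_symmDiff, Pi.add_apply, add_mul, Finset.sum_add_distrib]

lemma pc_symmDiff_right (a b c : Finset Q) : pc a (b ∆ c) = pc a b + pc a c := by
  rw [pc_comm, pc_symmDiff_left, pc_comm b a, pc_comm c a]

lemma inter_symmDiff_left (a b c : Finset Q) : (a ∆ b) ∩ c = (a ∩ c) ∆ (b ∩ c) := by
  ext q; simp only [Finset.mem_inter, Finset.mem_symmDiff]; tauto

lemma inter_symmDiff_right (a b c : Finset Q) : a ∩ (b ∆ c) = (a ∩ b) ∆ (a ∩ c) := by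
  ext q; simp only [Finset.mem_inter, Finset.mem_symmDiff]; tauto


lemma zmod2_cases' : ∀ x : ZMod 2, x = 0 ∨ x = 1 := by decide

lemma zmod2_cases (x : ZMod 2) : x = 0 ∨ x = 1 := zmod2_cases' x

lemma zmod2_add_self (x : ZMod 2) : x + x = 0 := by
  rcases zmod2_cases x with h | h <;> subst h <;> decide

variable {C : CSS Q}

lemma SZ_sub_ZZ : C.SZ ⊆ ZZ C := fun a ha c hc => C.comm a ha c hc

lemma SX_sub_ZX : C.SX ⊆ ZX C := fun b hb f hf => by
  rw [Finset.inter_comm]; exact C.comm f hf b hb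

lemma empty_mem_ZX : (∅ : Finset Q) ∈ ZX C := fun f _ => by simp

lemma ZX_symmDiff {a b : Finset Q} (ha : a ∈ ZX C) (hb : b ∈ ZX C) : a ∆ b ∈ ZX C := by
  intro f hf
  rw [dvd_iff_pc, pc_symmDiff_left, (dvd_iff_pc a f).mp (ha f hf),
    (dvd_iff_pc b f).mp (hb f hf), add_zero]

lemma ZZ_symmDiff {a b : Finset Q} (ha : a ∈ ZZ C) (hb : b ∈ ZZ C) : a ∆ b ∈ ZZ C := by
  intro c hc
  rw [dvd_iff_pc, pc_symmDiff_left, (dvd_iff_pc a c).mp (ha c hc),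
    (dvd_iff_pc b c).mp (hb c hc), add_zero]

lemma mem_G_of_gen {α β : Finset Q} (hβ : β ∈ ZX C) : α ∩ β ∈ G C α := by
  intro S hS
  exact hS.2 (Or.inr ⟨β, hβ, rfl⟩)

lemma G_decomp {α z : Finset Q} (hz : z ∈ G C α) :
    ∃ s ∈ C.SZ, ∃ β ∈ ZX C, z = s ∆ (α ∩ β) := by
  set S₀ : Set (Finset Q) := {z | ∃ s ∈ C.SZ, ∃ β ∈ ZX C, z = s ∆ (α ∩ β)} with hS₀
  have hsub : IsSubgroup S₀ := by
    constructor
    · exact ⟨∅, C.hSZ.1, ∅, empty_mem_ZX, by simp⟩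
    · rintro a ⟨s, hs, β, hβ, rfl⟩ b ⟨s', hs', β', hβ', rfl⟩
      refine ⟨s ∆ s', C.hSZ.2 s hs s' hs', β ∆ β', ZX_symmDiff hβ hβ', ?_⟩
      rw [inter_symmDiff_right]
      ac_rfl
  have hT : C.SZ ∪ {x | ∃ β ∈ ZX C, x = α ∩ β} ⊆ S₀ := by
    rintro x (hx | ⟨β, hβ, rfl⟩)
    · refine ⟨x, hx, ∅, empty_mem_ZX, ?_⟩
      rw [Finset.inter_empty, ← Finset.bot_eq_empty, symmDiff_bot]
    · refine ⟨∅, C.hSZ.1, β, hβ, ?_⟩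
      rw [← Finset.bot_eq_empty, bot_symmDiff]
  exact hz S₀ ⟨hsub, hT⟩

lemma pc_logical (hdual : Dual C) (hsingle : SingleQubit C)
    {β z : Finset Q} (hβ : LogicalX C β) (hz : LogicalZ C z) : pc β z = 1 := by
  rcases zmod2_cases (pc β z) with h0 | h1
  · exfalso
    apply hβ.2
    rw [hdual.2]
    intro z' hz'
    rw [dvd_iff_pc]
    by_cases hz'SZ : z' ∈ C.SZ
    · exact (dvd_iff_pc β z').mp (hβ.1 z' hz'SZ)
    · have hdiff : z ∆ z' ∈ C.SZ := hsingle.2.2 z z' hz ⟨hz', hz'SZ⟩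
      have : pc β z' = pc β z + pc β (z ∆ z') := by
        rw [← pc_symmDiff_right]
        congr 1
        exact (symmDiff_symmDiff_cancel_left z z').symm
      rw [this, h0, (dvd_iff_pc β (z ∆ z')).mp (hβ.1 _ hdiff), add_zero]
  · exact h1

lemma inter_ZX_ZX_mem_ZZ (hinter : Inter C) {β γ : Finset Q}
    (hβ : β ∈ ZX C) (hγ : γ ∈ ZX C) : β ∩ γ ∈ ZZ C := by
  rw [hinter]; exact ⟨β, hβ, γ, hγ, rfl⟩

lemma inter_SX_ZX_mem_SZ (hdual : Dual C) (hinter : Inter C) {b γ : Finset Q}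
    (hb : b ∈ C.SX) (hγ : γ ∈ ZX C) : b ∩ γ ∈ C.SZ := by
  rw [hdual.1]
  intro γ' hγ'
  have hZZ : γ ∩ γ' ∈ ZZ C := inter_ZX_ZX_mem_ZZ hinter hγ hγ'
  have h2 := hZZ b hb
  rw [Finset.inter_comm, ← Finset.inter_assoc] at h2
  exact h2

lemma logicalZ_decomp (hdual : Dual C) (hinter : Inter C) {z : Finset Q}
    (hz : LogicalZ C z) :
    ∃ β γ, LogicalX C β ∧ LogicalX C γ ∧ z = β ∩ γ := by
  have := (Set.ext_iff.mp hinter z).mp hz.1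
  obtain ⟨β, hβ, γ, hγ, rfl⟩ := this
  refine ⟨β, γ, ⟨hβ, fun hβSX => hz.2 (inter_SX_ZX_mem_SZ hdual hinter hβSX hγ)⟩,
    ⟨hγ, fun hγSX => hz.2 ?_⟩, rfl⟩
  rw [Finset.inter_comm]
  exact inter_SX_ZX_mem_SZ hdual hinter hγSX hβ

lemma exists_logicalZ (hsingle : SingleQubit C) : ∃ z, LogicalZ C z := by
  by_contra h
  push_neg at h
  apply hsingle.2.1
  apply Set.Subset.antisymm
  · intro z hz
    by_contra hzSZ
    exact (h z) ⟨hz, hzSZ⟩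
  · exact SZ_sub_ZZ

lemma exists_logicalX (hsingle : SingleQubit C) : ∃ x, LogicalX C x := by
  by_contra h
  push_neg at h
  apply hsingle.1.1
  apply Set.Subset.antisymm
  · intro x hx
    by_contra hxSX
    exact (h x) ⟨hx, hxSX⟩
  · exact SX_sub_ZX

set_option maxHeartbeats 1000000 in
lemma inter_logical_logical (hdual : Dual C) (hsingle : SingleQubit C) (hinter : Inter C)
    {β β' : Finset Q} (hβ : LogicalX C β) (hβ' : LogicalX C β') :
    LogicalZ C (β ∩ β') := by
  refine ⟨inter_ZX_ZX_mem_ZZ hinter hβ.1 hβ'.1, fun hSZ => ?_⟩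
  obtain ⟨z₀, hz₀⟩ := exists_logicalZ hsingle
  obtain ⟨γ, γ', hγ, hγ', rfl⟩ := logicalZ_decomp hdual hinter hz₀
  apply hz₀.2
  have hb : β ∆ γ ∈ C.SX := hsingle.1.2 β γ hβ hγ
  have hb' : β' ∆ γ' ∈ C.SX := hsingle.1.2 β' γ' hβ' hγ'
  have hγeq : γ = β ∆ (β ∆ γ) := (symmDiff_symmDiff_cancel_left β γ).symm
  have hγ'eq : γ' = β' ∆ (β' ∆ γ') := (symmDiff_symmDiff_cancel_left β' γ').symm
  have key : γ ∩ γ' = ((β ∩ β') ∆ (β ∩ (β' ∆ γ'))) ∆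
      (((β ∆ γ) ∩ β') ∆ ((β ∆ γ) ∩ (β' ∆ γ'))) := by
    ext q
    simp only [Finset.mem_symmDiff, Finset.mem_inter]
    tauto
  rw [key]
  have m1 : β ∩ (β' ∆ γ') ∈ C.SZ := by
    rw [Finset.inter_comm]
    exact inter_SX_ZX_mem_SZ hdual hinter hb' hβ.1
  have m2 : (β ∆ γ) ∩ β' ∈ C.SZ := inter_SX_ZX_mem_SZ hdual hinter hb hβ'.1
  have m3 : (β ∆ γ) ∩ (β' ∆ γ') ∈ C.SZ :=
    inter_SX_ZX_mem_SZ hdual hinter hb (SX_sub_ZX hb')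
  exact C.hSZ.2 _ (C.hSZ.2 _ hSZ _ m1) _ (C.hSZ.2 _ m2 _ m3)

/-- Key lemma (B): no logical `Z` is realized as `α ∩ b` with `b ∈ SX`. -/
lemma keyB (hdual : Dual C) (hsingle : SingleQubit C) (hinter : Inter C)
    {α b : Finset Q} (hb : b ∈ C.SX) (hZZ : α ∩ b ∈ ZZ C) : α ∩ b ∈ C.SZ := by
  by_contra hSZ
  obtain ⟨γ, γ', hγ, hγ', heq⟩ := logicalZ_decomp hdual hinter ⟨hZZ, hSZ⟩
  have hodd : pc (α ∩ b) γ = 1 := by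
    rw [pc_comm]
    exact pc_logical hdual hsingle hγ ⟨hZZ, hSZ⟩
  have hsub : (α ∩ b) ∩ γ = α ∩ b := by
    rw [heq]
    ext q
    simp only [Finset.mem_inter]
    tauto
  have heven : pc (α ∩ b) b = 0 := (dvd_iff_pc _ _).mp (hZZ b hb)
  have hsub' : (α ∩ b) ∩ b = α ∩ b := by
    rw [Finset.inter_assoc, Finset.inter_self]
  rw [pc, hsub] at hodd
  rw [pc, hsub'] at heven
  rw [hodd] at heven
  exact one_ne_zero heven

lemma tolerable_of {α : Finset Q}
    (h : ∀ β ∈ ZX C, α ∩ β ∈ ZZ C → α ∩ β ∈ C.SZ) : Tolerable C α := by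
  intro z hz hzlog
  obtain ⟨s, hs, β, hβ, rfl⟩ := G_decomp hz
  have hwZZ : α ∩ β ∈ ZZ C := by
    have heq : α ∩ β = s ∆ (s ∆ (α ∩ β)) := (symmDiff_symmDiff_cancel_left _ _).symm
    rw [heq]
    exact ZZ_symmDiff (SZ_sub_ZZ hs) hzlog.1
  exact hzlog.2 (C.hSZ.2 s hs _ (h β hβ hwZZ))

set_option maxHeartbeats 1600000 in
/-- Key lemma (A): some logical `X` intersects `α` in an element of `Z_Z`. -/
lemma existsA (hdual : Dual C) (hsingle : SingleQubit C) (hinter : Inter C)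
    (α : Finset Q) {γ : Finset Q} (hγ : LogicalX C γ) :
    ∃ β, LogicalX C β ∧ α ∩ β ∈ ZZ C := by
  classical
  set tri : (Q → ZMod 2) → (Q → ZMod 2) → ZMod 2 :=
    fun x y => ∑ q, ind2 α q * (x q * y q) with htri
  have tri_add_l : ∀ x x' y, tri (x + x') y = tri x y + tri x' y := by
    intro x x' y
    simp only [htri, Pi.add_apply]
    rw [← Finset.sum_add_distrib]
    exact Finset.sum_congr rfl fun q _ => by ring
  have tri_smul_l : ∀ (c : ZMod 2) x y, tri (c • x) y = c • tri x y := by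
    intro c x y
    simp only [htri, Pi.smul_apply, smul_eq_mul, Finset.mul_sum]
    exact Finset.sum_congr rfl fun q _ => by ring
  have tri_add_r : ∀ x y y', tri x (y + y') = tri x y + tri x y' := by
    intro x y y'
    simp only [htri, Pi.add_apply]
    rw [← Finset.sum_add_distrib]
    exact Finset.sum_congr rfl fun q _ => by ring
  have tri_smul_r : ∀ (c : ZMod 2) x y, tri x (c • y) = c • tri x y := by
    intro c x y
    simp only [htri, Pi.smul_apply, smul_eq_mul, Finset.mul_sum]
    exact Finset.sum_congr rfl fun q _ => by ring
  have tri_comm : ∀ x y, tri x y = tri y x := by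
    intro x y
    exact Finset.sum_congr rfl fun q _ => by ring
  have tri_pc : ∀ a b : Finset Q, tri (ind2 a) (ind2 b) = pc (α ∩ a) b := by
    intro a b
    rw [pc_eq_sum]
    exact Finset.sum_congr rfl fun q _ => by
      rw [ind2_inter]; exact (mul_assoc _ _ _).symm
  set B3 : (Q → ZMod 2) →ₗ[ZMod 2] (Q → ZMod 2) →ₗ[ZMod 2] ZMod 2 :=
    LinearMap.mk₂ (ZMod 2) tri tri_add_l tri_smul_l tri_add_r tri_smul_r with hB3
  set W : Submodule (ZMod 2) (Q → ZMod 2) :=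
    { carrier := ind2 '' C.SX
      add_mem' := by
        rintro a b ⟨x, hx, rfl⟩ ⟨y, hy, rfl⟩
        exact ⟨x ∆ y, C.hSX.2 x hx y hy, ind2_symmDiff x y⟩
      zero_mem' := ⟨∅, C.hSX.1, by funext q; simp [ind2]⟩
      smul_mem' := by
        intro c x hx
        rcases zmod2_cases c with h | h <;> subst h
        · simp only [zero_smul]
          exact ⟨∅, C.hSX.1, by funext q; simp [ind2]⟩
        · simpa using hx } with hW
  set Φ : ↥W →ₗ[ZMod 2] ↥W →ₗ[ZMod 2] ZMod 2 := (B3.domRestrict W).compl₂ W.subtype with hΦ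
  have hΦ_apply : ∀ (x y : ↥W), Φ x y = tri (↑x) (↑y) := by
    intro x y; rfl
  set u : ↥W →ₗ[ZMod 2] ZMod 2 := (B3 (ind2 γ)).domRestrict W with hu
  have hu_apply : ∀ x : ↥W, u x = tri (ind2 γ) (↑x) := by
    intro x; rfl
  have hker : ∀ c : ↥W, Φ c = 0 → u c = 0 := by
    intro c hc
    obtain ⟨cF, hcF, hcind⟩ := c.2
    have hZZc : α ∩ cF ∈ ZZ C := by
      intro b hb
      rw [dvd_iff_pc, ← tri_pc]
      have hb' : ind2 b ∈ W := ⟨b, hb, rfl⟩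
      have := congrArg (fun φ : ↥W →ₗ[ZMod 2] ZMod 2 => φ ⟨ind2 b, hb'⟩) hc
      simp only [LinearMap.zero_apply] at this
      rw [hΦ_apply, ← hcind] at this
      exact this
    have hSZc : α ∩ cF ∈ C.SZ := keyB hdual hsingle hinter hcF hZZc
    rw [hu_apply, ← hcind, tri_comm, tri_pc]
    have := hγ.1 (α ∩ cF) hSZc
    rw [dvd_iff_pc] at this
    rw [pc_comm]
    exact this
  obtain ⟨s, hs⟩ :=
    fredholm Φ (fun x y => by rw [hΦ_apply, hΦ_apply, tri_comm]) u hker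
  obtain ⟨sF, hsF, hsind⟩ := s.2
  refine ⟨γ ∆ sF, ⟨ZX_symmDiff hγ.1 (SX_sub_ZX hsF), fun hβSX => hγ.2 ?_⟩, ?_⟩
  · have : (γ ∆ sF) ∆ sF = γ := symmDiff_symmDiff_cancel_right sF γ
    rw [← this]
    exact C.hSX.2 _ hβSX _ hsF
  · intro b hb
    have hb' : ind2 b ∈ W := ⟨b, hb, rfl⟩
    rw [dvd_iff_pc]
    rw [← tri_pc]
    rw [ind2_symmDiff]
    rw [tri_add_l]
    have h1 : tri (ind2 sF) (ind2 b) = Φ s ⟨ind2 b, hb'⟩ := by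
      rw [hΦ_apply, ← hsind]
    have h2 : tri (ind2 γ) (ind2 b) = u ⟨ind2 b, hb'⟩ := (hu_apply ⟨ind2 b, hb'⟩).symm
    rw [h1, h2, hs]
    exact zmod2_add_self _

/-- For every `X`-error syndrome there exists exactly one class, up to stabilizers, of
tolerable errors with that syndrome; hence tolerable errors form a set of correctable
errors.  (Two finsets have equal syndromes iff their symmetric difference lies in
`Z_X(S)`.) -/
theorem tolerable_exists_unique_class
    (C : CSS Q) (hdual : Dual C) (hsingle : SingleQubit C) (hinter : Inter C) :
    (∀ α : Finset Q, ∃ α' : Finset Q, Tolerable C α' ∧ α ∆ α' ∈ ZX C) ∧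
    (∀ α α' : Finset Q, Tolerable C α → Tolerable C α' → α ∆ α' ∈ ZX C →
      α ∆ α' ∈ C.SX) := by
  constructor
  · -- existence
    intro α
    by_cases htol : Tolerable C α
    · refine ⟨α, htol, ?_⟩
      rw [symmDiff_self, Finset.bot_eq_empty]
      exact empty_mem_ZX
    · simp only [Tolerable] at htol
      push_neg at htol
      obtain ⟨z, hzG, hzlog⟩ := htol
      obtain ⟨s, hs, β₀, hβ₀, rfl⟩ := G_decomp hzG
      have hwZZ : α ∩ β₀ ∈ ZZ C := by
        have heq : α ∩ β₀ = s ∆ (s ∆ (α ∩ β₀)) := (symmDiff_symmDiff_cancel_left _ _).symm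
        rw [heq]
        exact ZZ_symmDiff (SZ_sub_ZZ hs) hzlog.1
      have hwSZ : α ∩ β₀ ∉ C.SZ := fun hmem => hzlog.2 (C.hSZ.2 s hs _ hmem)
      have hβ₀X : LogicalX C β₀ :=
        ⟨hβ₀, fun hSX => hwSZ (keyB hdual hsingle hinter hSX hwZZ)⟩
      refine ⟨α ∆ β₀, ?_, ?_⟩
      · apply tolerable_of
        intro β hβ hZZ'
        rw [inter_symmDiff_left] at hZZ' ⊢
        have hβ₀β : β₀ ∩ β ∈ ZZ C := inter_ZX_ZX_mem_ZZ hinter hβ₀ hβ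
        have hαβZZ : α ∩ β ∈ ZZ C := by
          have heq : α ∩ β = ((α ∩ β) ∆ (β₀ ∩ β)) ∆ (β₀ ∩ β) :=
            (symmDiff_symmDiff_cancel_right _ _).symm
          rw [heq]
          exact ZZ_symmDiff hZZ' hβ₀β
        by_cases hβSX : β ∈ C.SX
        · have h1 : α ∩ β ∈ C.SZ := keyB hdual hsingle hinter hβSX hαβZZ
          have h2 : β₀ ∩ β ∈ C.SZ := by
            rw [Finset.inter_comm]
            exact inter_SX_ZX_mem_SZ hdual hinter hβSX hβ₀
          exact C.hSZ.2 _ h1 _ h2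
        · have hβlog : LogicalX C β := ⟨hβ, hβSX⟩
          by_cases hαβSZ : α ∩ β ∈ C.SZ
          · exfalso
            have hb : β ∆ β₀ ∈ C.SX := hsingle.1.2 β β₀ hβlog hβ₀X
            have hZZ2 : α ∩ (β ∆ β₀) ∈ ZZ C := by
              rw [inter_symmDiff_right]
              exact ZZ_symmDiff hαβZZ hwZZ
            have hSZ2 : α ∩ (β ∆ β₀) ∈ C.SZ := keyB hdual hsingle hinter hb hZZ2
            apply hwSZ
            have heq : α ∩ β₀ = (α ∩ (β ∆ β₀)) ∆ (α ∩ β) := by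
              ext q
              simp only [Finset.mem_symmDiff, Finset.mem_inter]
              tauto
            rw [heq]
            exact C.hSZ.2 _ hSZ2 _ hαβSZ
          · have hlog1 : LogicalZ C (α ∩ β) := ⟨hαβZZ, hαβSZ⟩
            have hlog2 : LogicalZ C (β₀ ∩ β) :=
              inter_logical_logical hdual hsingle hinter hβ₀X hβlog
            exact hsingle.2.2 _ _ hlog1 hlog2
      · rw [symmDiff_symmDiff_cancel_left]
        exact hβ₀
  · -- uniqueness
    intro α α' htol htol' hδ
    by_contra hδSX
    have hδlog : LogicalX C (α ∆ α') := ⟨hδ, hδSX⟩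
    obtain ⟨x₀, hx₀⟩ := exists_logicalX hsingle
    obtain ⟨β, hβlog, hαβZZ⟩ := existsA hdual hsingle hinter α hx₀
    have hδβ : LogicalZ C ((α ∆ α') ∩ β) :=
      inter_logical_logical hdual hsingle hinter hδlog hβlog
    have hα'βZZ : α' ∩ β ∈ ZZ C := by
      have heq : α' ∩ β = (α ∩ β) ∆ ((α ∆ α') ∩ β) := by
        ext q
        simp only [Finset.mem_symmDiff, Finset.mem_inter]
        tauto
      rw [heq]
      exact ZZ_symmDiff hαβZZ hδβ.1
    have h1 : α ∩ β ∈ C.SZ := by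
      by_contra h
      exact htol _ (mem_G_of_gen hβlog.1) ⟨hαβZZ, h⟩
    have h2 : α' ∩ β ∈ C.SZ := by
      by_contra h
      exact htol' _ (mem_G_of_gen hβlog.1) ⟨hα'βZZ, h⟩
    apply hδβ.2
    rw [inter_symmDiff_left]
    exact C.hSZ.2 _ h1 _ h2


end CC
end
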